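/- Let G be a finite simple bipartite graph and let T be an optimal tetragonal subgraph of G with |V(T)| = 2m ≥ 6, and set R := {v ∈ V(G) \ V(T) : v has at least m − 1 neighbors in V(T)}. Then for every vertex v of G lying outside V(T) ∪ R, exactly one of the following holds: (i) v has no neighbor in R and at most m − 2 neighbors in V(T); (ii) v has exactly one neighbor in R and no neighbor in V(T). -/

import Mathlib

open SimpleGraph

namespace Dean

variable {V : Type*}

noncomputable def degN (G : SimpleGraph V) (v : V) : ℕ := (G.neighborSet v).ncard

def HasCycleMod (G : SimpleGraph V) (k : ℕ) (r : ℤ) : Prop :=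
  ∃ (v : V) (c : G.Walk v v), c.IsCycle ∧ (k : ℤ) ∣ ((c.length : ℤ) - r)

def HasConsecutiveCycles (G : SimpleGraph V) (k : ℕ) : Prop :=
  ∃ a : ℕ, ∀ i < k, ∃ (v : V) (c : G.Walk v v), c.IsCycle ∧ c.length = a + i

def HasAdmissibleCycles (G : SimpleGraph V) (k : ℕ) : Prop :=
  ∃ a d : ℕ, (d = 1 ∨ d = 2) ∧
    ∀ i < k, ∃ (v : V) (c : G.Walk v v), c.IsCycle ∧ c.length = a + d * i

/-- `HGraph k n t` : complete bipartite `K_{k,n}` minus `k - t` edges at the vertex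
`Sum.inr 0` of the part of size `n`, so that this vertex keeps exactly `t` neighbours. -/
def HGraph (k n t : ℕ) : SimpleGraph (Fin k ⊕ Fin n) :=
  SimpleGraph.fromRel fun x y =>
    ∃ (i : Fin k) (j : Fin n), x = Sum.inl i ∧ y = Sum.inr j ∧ (j.val ≠ 0 ∨ i.val < t)

def IsKkplus1 (k : ℕ) (G : SimpleGraph V) : Prop :=
  Nonempty (G ≃g completeGraph (Fin (k + 1)))

def IsKkk (k : ℕ) (G : SimpleGraph V) : Prop :=
  Nonempty (G ≃g completeBipartiteGraph (Fin k) (Fin k))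

def IsHGraph (k : ℕ) (G : SimpleGraph V) : Prop :=
  ∃ n t, 2 ≤ t ∧ t ≤ k ∧ k < n ∧ Nonempty (G ≃g HGraph k n t)

def IsExceptional (k : ℕ) (G : SimpleGraph V) : Prop :=
  IsKkplus1 k G ∨ IsKkk k G ∨ IsHGraph k G

def IsBipExceptional (k : ℕ) (G : SimpleGraph V) : Prop :=
  IsKkk k G ∨ IsHGraph k G

def IsCutVertex (G : SimpleGraph V) (v : V) : Prop :=
  ∃ (a b : V) (ha : a ≠ v) (hb : b ≠ v), G.Reachable a b ∧
    ¬ (G.induce {u : V | u ≠ v}).Reachable ⟨a, ha⟩ ⟨b, hb⟩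

def NoCutVtxIn (G : SimpleGraph V) (B : Set V) : Prop :=
  ∀ v ∈ B, B = {v} ∨ (G.induce (B \ {v})).Connected

def IsBlockSet (G : SimpleGraph V) (B : Set V) : Prop :=
  (G.induce B).Connected ∧ NoCutVtxIn G B ∧
    ∀ B' : Set V, B ⊆ B' → (G.induce B').Connected → NoCutVtxIn G B' → B' = B

def IsEndBlock (G : SimpleGraph V) (B : Set V) : Prop :=
  IsBlockSet G B ∧ {v | v ∈ B ∧ IsCutVertex G v}.Subsingleton

def IsThreeConnected (G : SimpleGraph V) : Prop :=
  4 ≤ Nat.card V ∧ ∀ S : Set V, S.ncard ≤ 2 → (G.induce (Sᶜ : Set V)).Connected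

def IsTwoConnected (G : SimpleGraph V) : Prop :=
  3 ≤ Nat.card V ∧ ∀ v : V, (G.induce ({v}ᶜ : Set V)).Connected

def TypeOne (k : ℕ) (G : SimpleGraph V) : Prop :=
  IsThreeConnected G ∧ {v : V | degN G v < k}.Subsingleton

/-- the graph `G - θ + θ₁θ₂`. -/
def modGraph (G : SimpleGraph V) (θ θ₁ θ₂ : V) (h₁ : θ₁ ≠ θ) (h₂ : θ₂ ≠ θ) :
    SimpleGraph ↥{u : V | u ≠ θ} :=
  (G.induce {u : V | u ≠ θ}) ⊔ SimpleGraph.fromEdgeSet {s(⟨θ₁, h₁⟩, ⟨θ₂, h₂⟩)}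

def TypeTwo (k : ℕ) (G : SimpleGraph V) (θ θ₁ θ₂ : V) : Prop :=
  degN G θ = 2 ∧ (∀ v, degN G v = 2 → v = θ) ∧
  G.Adj θ θ₁ ∧ G.Adj θ θ₂ ∧ θ₁ ≠ θ₂ ∧
  ∃ (h₁ : θ₁ ≠ θ) (h₂ : θ₂ ≠ θ),
    IsThreeConnected (modGraph G θ θ₁ θ₂ h₁ h₂) ∧
    ∀ v, k ≤ degN (modGraph G θ θ₁ θ₂ h₁ h₂) v

def IsKWeak (k : ℕ) (G : SimpleGraph V) : Prop :=
  TypeOne k G ∨ ∃ θ θ₁ θ₂, TypeTwo k G θ θ₁ θ₂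

inductive IsTrigonal : SimpleGraph V → SimpleGraph V → Set V → Prop
  | base (a b c : V) (hab : a ≠ b) (hbc : b ≠ c) (hac : a ≠ c) :
      IsTrigonal (SimpleGraph.fromEdgeSet {s(a, b), s(b, c), s(a, c)})
        (SimpleGraph.fromEdgeSet {s(a, b), s(b, c), s(a, c)}) {a, b, c}
  | extend (T B : SimpleGraph V) (S : Set V) (a b x : V)
      (h : IsTrigonal T B S) (hx : x ∉ S) (hab : B.Adj a b) :
      IsTrigonal (T ⊔ SimpleGraph.fromEdgeSet {s(a, x), s(x, b)})
        (B.deleteEdges {s(a, b)} ⊔ SimpleGraph.fromEdgeSet {s(a, x), s(x, b)})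
        (insert x S)

inductive IsTetragonal : SimpleGraph V → SimpleGraph V → Set V → Prop
  | base (a b c d : V) (hab : a ≠ b) (hac : a ≠ c) (had : a ≠ d)
      (hbc : b ≠ c) (hbd : b ≠ d) (hcd : c ≠ d) :
      IsTetragonal (SimpleGraph.fromEdgeSet {s(a, b), s(b, c), s(c, d), s(d, a)})
        (SimpleGraph.fromEdgeSet {s(a, b), s(b, c), s(c, d), s(d, a)}) {a, b, c, d}
  | extend (T B : SimpleGraph V) (S : Set V) (a b x y : V)
      (h : IsTetragonal T B S) (hx : x ∉ S) (hy : y ∉ S) (hxy : x ≠ y) (hab : B.Adj a b) :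
      IsTetragonal (T ⊔ SimpleGraph.fromEdgeSet {s(a, x), s(x, y), s(y, b)})
        (B.deleteEdges {s(a, b)} ⊔ SimpleGraph.fromEdgeSet {s(a, x), s(x, y), s(y, b)})
        (insert x (insert y S))

def IsTetragonalSubgraph (G T B : SimpleGraph V) (S : Set V) : Prop :=
  IsTetragonal T B S ∧ T ≤ G

def IsOptimalTetragonal (G T B : SimpleGraph V) (S : Set V) : Prop :=
  IsTetragonalSubgraph G T B S ∧
  (∀ (T' B' : SimpleGraph V) (S' : Set V),
    IsTetragonalSubgraph G T' B' S' → S'.ncard ≤ S.ncard) ∧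
  (∀ (T' B' : SimpleGraph V) (S' : Set V),
    IsTetragonalSubgraph G T' B' S' → S'.ncard = S.ncard →
      (G.induce S').edgeSet.ncard ≤ (G.induce S).edgeSet.ncard)


lemma tet_sub {T B : SimpleGraph V} {S : Set V} (h : IsTetragonal T B S) :
    B ≤ T ∧ ∀ ⦃u w : V⦄, T.Adj u w → u ∈ S ∧ w ∈ S := by
  induction h with
  | base a b c d hab hac had hbc hbd hcd =>
    refine ⟨le_refl _, ?_⟩
    intro u w huw
    rw [fromEdgeSet_adj] at huw
    obtain ⟨hm, -⟩ := huw
    simp only [Set.mem_insert_iff, Set.mem_singleton_iff, Sym2.eq_iff] at hm ⊢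
    tauto
  | extend T B S a b x y h hx hy hxy hab ih =>
    obtain ⟨hBT, hTS⟩ := ih
    constructor
    · exact sup_le_sup (le_trans (SimpleGraph.deleteEdges_le _) hBT) (le_refl _)
    · intro u w huw
      have hab' : a ∈ S ∧ b ∈ S := hTS (hBT hab)
      rcases huw with huw | huw
      · obtain ⟨h1, h2⟩ := hTS huw
        exact ⟨Set.mem_insert_iff.2 (Or.inr (Set.mem_insert_iff.2 (Or.inr h1))),
          Set.mem_insert_iff.2 (Or.inr (Set.mem_insert_iff.2 (Or.inr h2)))⟩
      · rw [fromEdgeSet_adj] at huw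
        obtain ⟨hm, -⟩ := huw
        simp only [Set.mem_insert_iff, Set.mem_singleton_iff, Sym2.eq_iff] at hm ⊢
        rcases hm with (⟨rfl, rfl⟩ | ⟨rfl, rfl⟩) | (⟨rfl, rfl⟩ | ⟨rfl, rfl⟩) | (⟨rfl, rfl⟩ | ⟨rfl, rfl⟩)
        · exact ⟨Or.inr (Or.inr hab'.1), Or.inl rfl⟩
        · exact ⟨Or.inl rfl, Or.inr (Or.inr hab'.1)⟩
        · exact ⟨Or.inl rfl, Or.inr (Or.inl rfl)⟩
        · exact ⟨Or.inr (Or.inl rfl), Or.inl rfl⟩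
        · exact ⟨Or.inr (Or.inl rfl), Or.inr (Or.inr hab'.2)⟩
        · exact ⟨Or.inr (Or.inr hab'.2), Or.inr (Or.inl rfl)⟩


set_option maxHeartbeats 1000000 in
lemma tet_nbr {T B : SimpleGraph V} {S : Set V} (h : IsTetragonal T B S) :
    ∀ s ∈ S, ∃ u w, u ≠ w ∧ B.neighborSet s = {u, w} := by
  induction h with
  | base a b c d hab hac had hbc hbd hcd =>
    intro s hs
    simp only [Set.mem_insert_iff, Set.mem_singleton_iff] at hs
    rcases hs with rfl | rfl | rfl | rfl
    · refine ⟨b, d, hbd, ?_⟩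
      ext t
      simp only [mem_neighborSet, fromEdgeSet_adj, Set.mem_insert_iff,
        Set.mem_singleton_iff, Sym2.eq_iff]
      aesop
    · refine ⟨a, c, hac.symm ∘ Eq.symm, ?_⟩
      ext t
      simp only [mem_neighborSet, fromEdgeSet_adj, Set.mem_insert_iff,
        Set.mem_singleton_iff, Sym2.eq_iff]
      aesop
    · refine ⟨b, d, hbd, ?_⟩
      ext t
      simp only [mem_neighborSet, fromEdgeSet_adj, Set.mem_insert_iff,
        Set.mem_singleton_iff, Sym2.eq_iff]
      aesop
    · refine ⟨c, a, fun e => hac e.symm, ?_⟩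
      ext t
      simp only [mem_neighborSet, fromEdgeSet_adj, Set.mem_insert_iff,
        Set.mem_singleton_iff, Sym2.eq_iff]
      aesop
  | extend T B S a b x y h hx hy hxy hab ih =>
    obtain ⟨hBT, hTS⟩ := tet_sub h
    have hnbrS : ∀ {p q : V}, B.Adj p q → p ∈ S ∧ q ∈ S := fun h' => hTS (hBT h')
    have haS : a ∈ S := (hnbrS hab).1
    have hbS : b ∈ S := (hnbrS hab).2
    have hax : a ≠ x := fun e => hx (e ▸ haS)
    have hay : a ≠ y := fun e => hy (e ▸ haS)
    have hbx : b ≠ x := fun e => hx (e ▸ hbS)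
    have hby : b ≠ y := fun e => hy (e ▸ hbS)
    have hanb : a ≠ b := hab.ne
    intro s hs
    simp only [Set.mem_insert_iff] at hs
    rcases hs with rfl | rfl | hsS
    · -- s = x
      refine ⟨a, y, hay, ?_⟩
      ext t
      have hnadj : ∀ t, ¬ B.Adj s t := fun t hB => hx (hnbrS hB).1
      simp only [mem_neighborSet, sup_adj, deleteEdges_adj, fromEdgeSet_adj,
        Set.mem_insert_iff, Set.mem_singleton_iff, Sym2.eq_iff, hnadj t, false_and,
        false_or]
      aesop
    · -- s = y
      refine ⟨x, b, fun e => hbx e.symm, ?_⟩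
      ext t
      have hnadj : ∀ t, ¬ B.Adj s t := fun t hB => hy (hnbrS hB).1
      simp only [mem_neighborSet, sup_adj, deleteEdges_adj, fromEdgeSet_adj,
        Set.mem_insert_iff, Set.mem_singleton_iff, Sym2.eq_iff, hnadj t, false_and,
        false_or]
      aesop
    · -- s ∈ S
      have hsx : s ≠ x := fun e => hx (e ▸ hsS)
      have hsy : s ≠ y := fun e => hy (e ▸ hsS)
      obtain ⟨u, w, huw, hset⟩ := ih s hsS
      have hBiff : ∀ t, B.Adj s t ↔ t = u ∨ t = w := by
        intro t
        constructor
        · intro hB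
          have : t ∈ ({u, w} : Set V) := hset ▸ hB
          simpa using this
        · have hBu : u ∈ B.neighborSet s := by rw [hset]; exact Set.mem_insert _ _
          have hBw : w ∈ B.neighborSet s := by
            rw [hset]; exact Set.mem_insert_of_mem _ rfl
          rintro (rfl | rfl)
          · exact hBu
          · exact hBw
      have huS : u ∈ S := (hnbrS ((hBiff u).2 (Or.inl rfl))).2
      have hwS : w ∈ S := (hnbrS ((hBiff w).2 (Or.inr rfl))).2
      have hux : u ≠ x := fun e => hx (e ▸ huS)
      have hwx : w ≠ x := fun e => hx (e ▸ hwS)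
      have huy : u ≠ y := fun e => hy (e ▸ huS)
      have hwy : w ≠ y := fun e => hy (e ▸ hwS)
      by_cases hsa : s = a
      · subst hsa
        have hbmem : b = u ∨ b = w := (hBiff b).1 hab
        rcases hbmem with rfl | rfl
        · refine ⟨x, w, fun e => hwx e.symm, ?_⟩
          ext t
          simp only [mem_neighborSet, sup_adj, deleteEdges_adj, fromEdgeSet_adj,
            Set.mem_insert_iff, Set.mem_singleton_iff, Sym2.eq_iff, hBiff t]
          aesop
        · refine ⟨x, u, fun e => hux e.symm, ?_⟩
          ext t
          simp only [mem_neighborSet, sup_adj, deleteEdges_adj, fromEdgeSet_adj,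
            Set.mem_insert_iff, Set.mem_singleton_iff, Sym2.eq_iff, hBiff t]
          aesop
      · by_cases hsb : s = b
        · subst hsb
          have hamem : a = u ∨ a = w := (hBiff a).1 hab.symm
          rcases hamem with rfl | rfl
          · refine ⟨y, w, fun e => hwy e.symm, ?_⟩
            ext t
            simp only [mem_neighborSet, sup_adj, deleteEdges_adj, fromEdgeSet_adj,
              Set.mem_insert_iff, Set.mem_singleton_iff, Sym2.eq_iff, hBiff t]
            aesop
          · refine ⟨y, u, fun e => huy e.symm, ?_⟩
            ext t
            simp only [mem_neighborSet, sup_adj, deleteEdges_adj, fromEdgeSet_adj,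
              Set.mem_insert_iff, Set.mem_singleton_iff, Sym2.eq_iff, hBiff t]
            aesop
        · refine ⟨u, w, huw, ?_⟩
          ext t
          simp only [mem_neighborSet, sup_adj, deleteEdges_adj, fromEdgeSet_adj,
            Set.mem_insert_iff, Set.mem_singleton_iff, Sym2.eq_iff, hBiff t]
          aesop


lemma tet_card {T B : SimpleGraph V} {S : Set V} (h : IsTetragonal T B S) :
    B.edgeSet.ncard = S.ncard ∧ S.Finite ∧ B.edgeSet.Finite := by
  induction h with
  | base a b c d hab hac had hbc hbd hcd =>
    have hfin : ({s(a, b), s(b, c), s(c, d), s(d, a)} : Set (Sym2 V)).Finite :=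
      (Set.finite_singleton _).insert _ |>.insert _ |>.insert _
    have hd : (fromEdgeSet {s(a, b), s(b, c), s(c, d), s(d, a)}).edgeSet
        = {s(a, b), s(b, c), s(c, d), s(d, a)} := by
      rw [edgeSet_fromEdgeSet]
      ext e
      simp only [Set.mem_diff, Set.mem_insert_iff, Set.mem_singleton_iff,
        Set.mem_setOf_eq]
      constructor
      · tauto
      · intro hm
        refine ⟨hm, ?_⟩
        rcases hm with rfl | rfl | rfl | rfl <;> rw [Sym2.mem_diagSet, Sym2.mk_isDiag_iff]
        · exact hab
        · exact hbc
        · exact hcd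
        · exact fun e => had e.symm
    refine ⟨?_, (Set.finite_singleton d).insert c |>.insert b |>.insert a, by rw [hd]; exact hfin⟩
    rw [hd]
    have h1 : s(a, b) ∉ ({s(b, c), s(c, d), s(d, a)} : Set (Sym2 V)) := by
      intro hm
      simp only [Set.mem_insert_iff, Set.mem_singleton_iff, Sym2.eq_iff] at hm
      tauto
    have h2 : s(b, c) ∉ ({s(c, d), s(d, a)} : Set (Sym2 V)) := by
      intro hm
      simp only [Set.mem_insert_iff, Set.mem_singleton_iff, Sym2.eq_iff] at hm
      tauto
    have h3 : s(c, d) ∉ ({s(d, a)} : Set (Sym2 V)) := by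
      intro hm
      simp only [Set.mem_singleton_iff, Sym2.eq_iff] at hm
      tauto
    have h4 : a ∉ ({b, c, d} : Set V) := by
      intro hm
      simp only [Set.mem_insert_iff, Set.mem_singleton_iff] at hm
      tauto
    have h5 : b ∉ ({c, d} : Set V) := by
      intro hm
      simp only [Set.mem_insert_iff, Set.mem_singleton_iff] at hm
      tauto
    have h6 : c ∉ ({d} : Set V) := by
      intro hm
      simp only [Set.mem_singleton_iff] at hm
      tauto
    rw [Set.ncard_insert_of_notMem h1 ((Set.finite_singleton _).insert _ |>.insert _),
      Set.ncard_insert_of_notMem h2 ((Set.finite_singleton _).insert _),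
      Set.ncard_insert_of_notMem h3 (Set.finite_singleton _), Set.ncard_singleton,
      Set.ncard_insert_of_notMem h4 ((Set.finite_singleton _).insert _ |>.insert _),
      Set.ncard_insert_of_notMem h5 ((Set.finite_singleton _).insert _),
      Set.ncard_insert_of_notMem h6 (Set.finite_singleton _), Set.ncard_singleton]
  | extend T B S a b x y h hx hy hxy hab ih =>
    obtain ⟨hcard, hSfin, hEfin⟩ := ih
    obtain ⟨hBT, hTS⟩ := tet_sub h
    have hnbrS : ∀ {p q : V}, B.Adj p q → p ∈ S ∧ q ∈ S := fun h' => hTS (hBT h')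
    have haS : a ∈ S := (hnbrS hab).1
    have hbS : b ∈ S := (hnbrS hab).2
    have hax : a ≠ x := fun e => hx (e ▸ haS)
    have hay : a ≠ y := fun e => hy (e ▸ haS)
    have hbx : b ≠ x := fun e => hx (e ▸ hbS)
    have hby : b ≠ y := fun e => hy (e ▸ hbS)
    have hanb : a ≠ b := hab.ne
    have hE' : (B.deleteEdges {s(a, b)} ⊔ fromEdgeSet {s(a, x), s(x, y), s(y, b)}).edgeSet
        = (B.edgeSet \ {s(a, b)}) ∪ {s(a, x), s(x, y), s(y, b)} := by
      rw [edgeSet_sup, edgeSet_deleteEdges, edgeSet_fromEdgeSet]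
      congr 1
      ext e
      simp only [Set.mem_diff, Set.mem_insert_iff, Set.mem_singleton_iff,
        Set.mem_setOf_eq]
      constructor
      · tauto
      · intro hm
        refine ⟨hm, ?_⟩
        rcases hm with rfl | rfl | rfl <;> rw [Sym2.mem_diagSet, Sym2.mk_isDiag_iff]
        · exact hax
        · exact hxy
        · exact fun e => hby e.symm
    have hfin3 : ({s(a, x), s(x, y), s(y, b)} : Set (Sym2 V)).Finite :=
      (Set.finite_singleton _).insert _ |>.insert _
    have hfinD : (B.edgeSet \ {s(a, b)}).Finite := hEfin.diff
    refine ⟨?_, (hSfin.insert y).insert x, by rw [hE']; exact hfinD.union hfin3⟩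
    rw [hE']
    have hmemab : s(a, b) ∈ B.edgeSet := (mem_edgeSet B).2 hab
    have hdisj : Disjoint (B.edgeSet \ {s(a, b)}) ({s(a, x), s(x, y), s(y, b)} : Set (Sym2 V)) := by
      rw [Set.disjoint_right]
      rintro e (rfl | rfl | rfl) hmem
      · exact hx (hnbrS ((mem_edgeSet B).1 hmem.1)).2
      · exact hx (hnbrS ((mem_edgeSet B).1 hmem.1)).1
      · exact hy (hnbrS ((mem_edgeSet B).1 hmem.1)).1
    rw [Set.ncard_union_eq hdisj hfinD hfin3]
    have h1 : s(a, x) ∉ ({s(x, y), s(y, b)} : Set (Sym2 V)) := by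
      intro hm
      simp only [Set.mem_insert_iff, Set.mem_singleton_iff, Sym2.eq_iff] at hm
      tauto
    have h2 : s(x, y) ∉ ({s(y, b)} : Set (Sym2 V)) := by
      intro hm
      simp only [Set.mem_singleton_iff, Sym2.eq_iff] at hm
      tauto
    rw [Set.ncard_insert_of_notMem h1 ((Set.finite_singleton _).insert _),
      Set.ncard_insert_of_notMem h2 (Set.finite_singleton _), Set.ncard_singleton]
    have hxi : x ∉ insert y S := by
      simp only [Set.mem_insert_iff]
      rintro (rfl | hxS)
      · exact hxy rfl
      · exact hx hxS
    rw [Set.ncard_insert_of_notMem hxi (hSfin.insert y),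
      Set.ncard_insert_of_notMem hy hSfin]
    have := Set.ncard_diff_singleton_add_one hmemab hEfin
    omega


lemma map_sup' (f : V ↪ V) (G H : SimpleGraph V) :
    (G ⊔ H).map f = G.map f ⊔ H.map f := by
  ext u w
  simp only [map_adj, sup_adj]
  constructor
  · rintro ⟨p, q, (hpq | hpq), rfl, rfl⟩
    · exact Or.inl ⟨p, q, hpq, rfl, rfl⟩
    · exact Or.inr ⟨p, q, hpq, rfl, rfl⟩
  · rintro (⟨p, q, hpq, rfl, rfl⟩ | ⟨p, q, hpq, rfl, rfl⟩)
    · exact ⟨p, q, Or.inl hpq, rfl, rfl⟩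
    · exact ⟨p, q, Or.inr hpq, rfl, rfl⟩

lemma map_fromEdgeSet' (f : V ↪ V) (s : Set (Sym2 V)) :
    (fromEdgeSet s).map f = fromEdgeSet (Sym2.map f '' s) := by
  ext u w
  simp only [map_adj, fromEdgeSet_adj]
  constructor
  · rintro ⟨p, q, ⟨hm, hne⟩, rfl, rfl⟩
    exact ⟨⟨s(p, q), hm, Sym2.map_pair_eq f p q⟩, fun e => hne (f.injective e)⟩
  · rintro ⟨⟨e, he, hmap⟩, hne⟩
    induction e with
    | h p q =>
      rw [Sym2.map_pair_eq, Sym2.eq_iff] at hmap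
      rcases hmap with ⟨rfl, rfl⟩ | ⟨rfl, rfl⟩
      · exact ⟨p, q, ⟨he, fun e => hne (e ▸ rfl)⟩, rfl, rfl⟩
      · exact ⟨q, p, ⟨Sym2.eq_swap ▸ he, fun e => hne (e ▸ rfl)⟩, rfl, rfl⟩

lemma map_deleteEdges' (f : V ↪ V) (G : SimpleGraph V) (s : Set (Sym2 V)) :
    (G.deleteEdges s).map f = (G.map f).deleteEdges (Sym2.map f '' s) := by
  ext u w
  simp only [map_adj, deleteEdges_adj]
  constructor
  · rintro ⟨p, q, ⟨hpq, hns⟩, rfl, rfl⟩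
    refine ⟨⟨p, q, hpq, rfl, rfl⟩, ?_⟩
    rintro ⟨e, he, hmap⟩
    induction e with
    | h p' q' =>
      rw [Sym2.map_pair_eq, Sym2.eq_iff] at hmap
      rcases hmap with ⟨he1, he2⟩ | ⟨he1, he2⟩
      · rw [f.injective he1, f.injective he2] at he
        exact hns he
      · rw [f.injective he1, f.injective he2, Sym2.eq_swap] at he
        exact hns he
  · rintro ⟨⟨p, q, hpq, rfl, rfl⟩, hns⟩
    refine ⟨p, q, ⟨hpq, fun hm => hns ⟨s(p, q), hm, Sym2.map_pair_eq f p q⟩⟩, rfl, rfl⟩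

lemma tet_map {T B : SimpleGraph V} {S : Set V} (e : V ≃ V) (h : IsTetragonal T B S) :
    IsTetragonal (T.map e.toEmbedding) (B.map e.toEmbedding) (e '' S) := by
  induction h with
  | base a b c d hab hac had hbc hbd hcd =>
    have him : Sym2.map e.toEmbedding '' {s(a, b), s(b, c), s(c, d), s(d, a)}
        = {s(e a, e b), s(e b, e c), s(e c, e d), s(e d, e a)} := by
      rw [Set.image_insert_eq, Set.image_insert_eq, Set.image_insert_eq,
        Set.image_singleton, Sym2.map_pair_eq, Sym2.map_pair_eq, Sym2.map_pair_eq,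
        Sym2.map_pair_eq]
      rfl
    have hset : e '' ({a, b, c, d} : Set V) = {e a, e b, e c, e d} := by
      rw [Set.image_insert_eq, Set.image_insert_eq, Set.image_insert_eq,
        Set.image_singleton]
    rw [map_fromEdgeSet', him, hset]
    exact IsTetragonal.base (e a) (e b) (e c) (e d)
      (fun h' => hab (e.injective h')) (fun h' => hac (e.injective h'))
      (fun h' => had (e.injective h')) (fun h' => hbc (e.injective h'))
      (fun h' => hbd (e.injective h')) (fun h' => hcd (e.injective h'))
  | extend T B S a b x y h hx hy hxy hab ih =>
    have him3 : Sym2.map e.toEmbedding '' {s(a, x), s(x, y), s(y, b)}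
        = {s(e a, e x), s(e x, e y), s(e y, e b)} := by
      rw [Set.image_insert_eq, Set.image_insert_eq, Set.image_singleton,
        Sym2.map_pair_eq, Sym2.map_pair_eq, Sym2.map_pair_eq]
      rfl
    have him1 : Sym2.map e.toEmbedding '' ({s(a, b)} : Set (Sym2 V)) = {s(e a, e b)} := by
      rw [Set.image_singleton, Sym2.map_pair_eq]
      rfl
    have hset : e '' insert x (insert y S) = insert (e x) (insert (e y) (e '' S)) := by
      rw [Set.image_insert_eq, Set.image_insert_eq]
    rw [map_sup', map_sup', map_deleteEdges', map_fromEdgeSet', him3, him1, hset]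
    refine IsTetragonal.extend _ _ _ (e a) (e b) (e x) (e y) ih ?_ ?_
      (fun h' => hxy (e.injective h')) ?_
    · rintro ⟨u, hu, hequ⟩
      exact hx (e.injective hequ ▸ hu)
    · rintro ⟨u, hu, hequ⟩
      exact hy (e.injective hequ ▸ hu)
    · exact (map_adj _ _ _ _).2 ⟨a, b, hab, rfl, rfl⟩


lemma tet_decomp {T B : SimpleGraph V} {S : Set V} (h : IsTetragonal T B S) :
    (∃ a b c d : V, S = {a, b, c, d}) ∨
    ∃ (T0 B0 : SimpleGraph V) (S0 : Set V) (a b x y : V),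
      IsTetragonal T0 B0 S0 ∧ x ∉ S0 ∧ y ∉ S0 ∧ x ≠ y ∧ B0.Adj a b ∧
      T = T0 ⊔ fromEdgeSet {s(a, x), s(x, y), s(y, b)} ∧
      B = B0.deleteEdges {s(a, b)} ⊔ fromEdgeSet {s(a, x), s(x, y), s(y, b)} ∧
      S = insert x (insert y S0) := by
  cases h with
  | base a b c d hab hac had hbc hbd hcd => exact Or.inl ⟨a, b, c, d, rfl⟩
  | extend T0 B0 S0 a b x y h hx hy hxy hab =>
      exact Or.inr ⟨T0, B0, S0, a, b, x, y, h, hx, hy, hxy, hab, rfl, rfl, rfl⟩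

lemma classA_card {G T B : SimpleGraph V} {S : Set V} {m : ℕ}
    (h : IsTetragonal T B S) (hTG : T ≤ G) (c : G.Coloring (Fin 2))
    (hS : S.ncard = 2 * m) (i : Fin 2) :
    {s ∈ S | c s = i}.ncard = m := by
  classical
  obtain ⟨hcard, hSfin, hEfin⟩ := tet_card h
  obtain ⟨hBT, hTS⟩ := tet_sub h
  have hBG : B ≤ G := le_trans hBT hTG
  have hnbrS : ∀ {p q : V}, B.Adj p q → p ∈ S ∧ q ∈ S := fun h' => hTS (hBT h')
  have hAfin : ({s ∈ S | c s = i}).Finite := hSfin.subset (Set.sep_subset _ _)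
  have fin2 : ∀ j p q : Fin 2, p ≠ q → p = j ∨ q = j := by decide
  have hcov_aux : ∀ e, e ∈ B.edgeSet →
      ∃ a, (a ∈ S ∧ c a = i) ∧ a ∈ e := by
    intro e
    induction e with
    | h p q =>
      intro he
      have hadj : B.Adj p q := (mem_edgeSet B).1 he
      have hpq : c p ≠ c q := c.valid (hBG hadj)
      rcases fin2 i _ _ hpq with hp | hq
      · exact ⟨p, ⟨(hnbrS hadj).1, hp⟩, Sym2.mem_mk_left _ _⟩
      · exact ⟨q, ⟨(hnbrS hadj).2, hq⟩, Sym2.mem_mk_right _ _⟩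
  have hdisj_aux : ∀ e, e ∈ B.edgeSet → ∀ a b : V, c a = i → c b = i →
      a ∈ e → b ∈ e → a = b := by
    intro e
    induction e with
    | h p q =>
      intro he a b hca hcb hae hbe
      have hadj : B.Adj p q := (mem_edgeSet B).1 he
      have hpq : c p ≠ c q := c.valid (hBG hadj)
      rw [Sym2.mem_iff] at hae hbe
      rcases hae with rfl | rfl <;> rcases hbe with rfl | rfl
      · rfl
      · exact absurd (hca.trans hcb.symm) hpq
      · exact absurd (hcb.trans hca.symm) hpq
      · rfl
  have hcover : hEfin.toFinset
      = hAfin.toFinset.biUnion (fun a => hEfin.toFinset.filter (fun e => a ∈ e)) := by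
    ext e
    simp only [Finset.mem_biUnion, Finset.mem_filter, Set.Finite.mem_toFinset,
      Set.mem_setOf_eq]
    constructor
    · intro he
      obtain ⟨a, ha, hae⟩ := hcov_aux e he
      exact ⟨a, ha, he, hae⟩
    · rintro ⟨a, -, he, -⟩
      exact he
  have hdisj : ∀ a ∈ hAfin.toFinset, ∀ b ∈ hAfin.toFinset, a ≠ b →
      Disjoint (hEfin.toFinset.filter (fun e => a ∈ e))
        (hEfin.toFinset.filter (fun e => b ∈ e)) := by
    intro a ha b hb hab'
    simp only [Set.Finite.mem_toFinset, Set.mem_setOf_eq] at ha hb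
    rw [Finset.disjoint_left]
    rintro e he1 he2
    rw [Finset.mem_filter, Set.Finite.mem_toFinset] at he1 he2
    exact hab' (hdisj_aux e he1.1 a b ha.2 hb.2 he1.2 he2.2)
  have hfib : ∀ a ∈ hAfin.toFinset, (hEfin.toFinset.filter (fun e => a ∈ e)).card = 2 := by
    intro a ha
    simp only [Set.Finite.mem_toFinset, Set.mem_setOf_eq] at ha
    obtain ⟨u, w, huw, hset⟩ := tet_nbr h a ha.1
    have hBu : B.Adj a u := by
      have : u ∈ B.neighborSet a := by rw [hset]; exact Set.mem_insert _ _
      exact this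
    have hBw : B.Adj a w := by
      have : w ∈ B.neighborSet a := by rw [hset]; exact Set.mem_insert_of_mem _ rfl
      exact this
    have hmem_aux : ∀ e, e ∈ B.edgeSet → a ∈ e → e = s(a, u) ∨ e = s(a, w) := by
      intro e
      induction e with
      | h p q =>
        intro he hae
        have hadj : B.Adj p q := (mem_edgeSet B).1 he
        rw [Sym2.mem_iff] at hae
        rcases hae with h1 | h1
        · rw [← h1] at hadj ⊢
          have hq : q ∈ B.neighborSet a := hadj
          rw [hset] at hq
          rcases hq with rfl | rfl
          · exact Or.inl rfl
          · exact Or.inr rfl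
        · rw [← h1] at hadj ⊢
          have hq : p ∈ B.neighborSet a := hadj.symm
          rw [hset] at hq
          rcases hq with rfl | rfl
          · exact Or.inl Sym2.eq_swap
          · exact Or.inr Sym2.eq_swap
    have hfeq : hEfin.toFinset.filter (fun e => a ∈ e) = {s(a, u), s(a, w)} := by
      ext e
      simp only [Finset.mem_filter, Set.Finite.mem_toFinset, Finset.mem_insert,
        Finset.mem_singleton]
      constructor
      · rintro ⟨heE, hae⟩
        exact hmem_aux e heE hae
      · rintro (rfl | rfl)
        · exact ⟨(mem_edgeSet B).2 hBu, Sym2.mem_mk_left _ _⟩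
        · exact ⟨(mem_edgeSet B).2 hBw, Sym2.mem_mk_left _ _⟩
    rw [hfeq, Finset.card_insert_of_notMem, Finset.card_singleton]
    rw [Finset.mem_singleton]
    intro heq
    rw [Sym2.eq_iff] at heq
    rcases heq with ⟨-, h2⟩ | ⟨h1, h2⟩
    · exact huw h2
    · exact huw (h2.trans h1)
  have hEcard : hEfin.toFinset.card = 2 * hAfin.toFinset.card := by
    rw [hcover, Finset.card_biUnion hdisj, Finset.sum_congr rfl hfib,
      Finset.sum_const, smul_eq_mul, mul_comm]
  have hE : hEfin.toFinset.card = 2 * m := by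
    rw [← Set.ncard_eq_toFinset_card _ hEfin, hcard, hS]
  have hA : hAfin.toFinset.card = ({s ∈ S | c s = i}).ncard := by
    rw [← Set.ncard_eq_toFinset_card _ hAfin]
  omega


lemma path3_le {G : SimpleGraph V} {p q r t : V}
    (h1 : G.Adj p q) (h2 : G.Adj q r) (h3 : G.Adj r t) :
    fromEdgeSet {s(p, q), s(q, r), s(r, t)} ≤ G := by
  intro u w huw
  rw [fromEdgeSet_adj] at huw
  obtain ⟨hm, hne⟩ := huw
  simp only [Set.mem_insert_iff, Set.mem_singleton_iff, Sym2.eq_iff] at hm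
  rcases hm with (⟨h4, h5⟩ | ⟨h4, h5⟩) | (⟨h4, h5⟩ | ⟨h4, h5⟩) | (⟨h4, h5⟩ | ⟨h4, h5⟩) <;>
    subst h4 <;> subst h5
  exacts [h1, h1.symm, h2, h2.symm, h3, h3.symm]

lemma swap_extend [DecidableEq V] {G T B : SimpleGraph V} {S : Set V}
    (h : IsTetragonal T B S) (hTG : T ≤ G)
    (bd wi v' wj a' : V) (hbdS : bd ∈ S) (hwiS : wi ∉ S) (hvS : v' ∉ S) (hwjS : wj ∉ S)
    (hne1 : wi ≠ v') (hne2 : v' ≠ wj) (hne3 : wi ≠ wj)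
    (hadj1 : G.Adj wi v') (hadj2 : G.Adj v' wj)
    (hcov : ∀ u, T.Adj bd u → G.Adj wi u)
    (haB : B.Adj bd a') (haG : G.Adj wj a') :
    ∃ T' B' : SimpleGraph V, IsTetragonal T' B'
        (insert v' (insert wj ((Equiv.swap bd wi) '' S))) ∧ T' ≤ G ∧
      (insert v' (insert wj ((Equiv.swap bd wi) '' S))).ncard = S.ncard + 2 ∧
      B' = ((B.map (Equiv.swap bd wi).toEmbedding).deleteEdges {s(wi, a')}
        ⊔ fromEdgeSet {s(wi, v'), s(v', wj), s(wj, a')}) := by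
  classical
  obtain ⟨hBT, hTS⟩ := tet_sub h
  obtain ⟨-, hSfin, -⟩ := tet_card h
  set σ := Equiv.swap bd wi with hσ
  have hσbd : σ bd = wi := Equiv.swap_apply_left _ _
  have hσwi : σ wi = bd := Equiv.swap_apply_right _ _
  have hσfix : ∀ u, u ≠ bd → u ≠ wi → σ u = u := fun u h1 h2 =>
    Equiv.swap_apply_of_ne_of_ne h1 h2
  have ha'S : a' ∈ S := (hTS (hBT haB)).2
  have ha'bd : a' ≠ bd := haB.ne'
  have ha'wi : a' ≠ wi := fun e => hwiS (e ▸ ha'S)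
  have hmapT : IsTetragonal (T.map σ.toEmbedding) (B.map σ.toEmbedding) (σ '' S) :=
    tet_map σ h
  have hT1G : T.map σ.toEmbedding ≤ G := by
    intro u w huw
    rw [map_adj] at huw
    obtain ⟨p, q, hpq, hp, hq⟩ := huw
    simp only [Equiv.coe_toEmbedding] at hp hq
    obtain ⟨hpS, hqS⟩ := hTS hpq
    have hpwi : p ≠ wi := fun e => hwiS (e ▸ hpS)
    have hqwi : q ≠ wi := fun e => hwiS (e ▸ hqS)
    subst hp hq
    by_cases hpb : p = bd
    · rw [hpb] at hpq ⊢
      have hqbd : q ≠ bd := hpq.ne'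
      rw [hσbd, hσfix q hqbd hqwi]
      exact hcov q hpq
    · by_cases hqb : q = bd
      · rw [hqb] at hpq ⊢
        rw [hσbd, hσfix p hpb hpwi]
        exact (hcov p hpq.symm).symm
      · rw [hσfix p hpb hpwi, hσfix q hqb hqwi]
        exact hTG hpq
  have hB1 : (B.map σ.toEmbedding).Adj wi a' := by
    rw [map_adj]
    exact ⟨bd, a', haB, by simp only [Equiv.coe_toEmbedding]; exact hσbd,
      by simp only [Equiv.coe_toEmbedding]; exact hσfix a' ha'bd ha'wi⟩
  have hmemimg : ∀ z, z ∉ S → z ≠ wi → z ∉ σ '' S := by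
    rintro z hzS hzwi ⟨u, huS, hσu⟩
    by_cases hub : u = bd
    · rw [hub, hσbd] at hσu
      exact hzwi hσu.symm
    · have huwi : u ≠ wi := fun e => hwiS (e ▸ huS)
      rw [hσfix u hub huwi] at hσu
      exact hzS (hσu ▸ huS)
  have hvimg : v' ∉ σ '' S := hmemimg v' hvS (fun e => hne1 e.symm)
  have hwjimg : wj ∉ σ '' S := hmemimg wj hwjS (fun e => hne3 e.symm)
  have hext := IsTetragonal.extend _ _ _ wi a' v' wj hmapT hvimg hwjimg hne2 hB1
  refine ⟨_, _, hext, ?_, ?_, rfl⟩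
  · exact sup_le hT1G (path3_le hadj1 hadj2 haG)
  · have hfin : (σ '' S).Finite := hSfin.image _
    have h1 : wj ∉ σ '' S := hwjimg
    have h2 : v' ∉ insert wj (σ '' S) := by
      simp only [Set.mem_insert_iff]
      rintro (rfl | hmem)
      · exact hne2 rfl
      · exact hvimg hmem
    rw [Set.ncard_insert_of_notMem h2 (hfin.insert wj),
      Set.ncard_insert_of_notMem h1 hfin,
      Set.ncard_image_of_injective S σ.injective]


lemma contra_one {G T B : SimpleGraph V} {S : Set V} {m : ℕ}
    (hopt : IsOptimalTetragonal G T B S) (c : G.Coloring (Fin 2))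
    (hcard : S.ncard = 2 * m) (hm : 3 ≤ m)
    {v w s0 : V} (hvS : v ∉ S) (hwS : w ∉ S)
    (hwdeg : m - 1 ≤ (G.neighborSet w ∩ S).ncard)
    (hvw : G.Adj v w) (hvs0 : G.Adj v s0) (hs0S : s0 ∈ S) : False := by
  obtain ⟨⟨htet, hTG⟩, hmax, -⟩ := hopt
  obtain ⟨hBT, hTS⟩ := tet_sub htet
  obtain ⟨-, hSfin, -⟩ := tet_card htet
  have fin2a : ∀ p q r : Fin 2, p ≠ r → q ≠ r → p = q := by decide
  have hAm : {s ∈ S | c s = c v}.ncard = m := classA_card htet hTG c hcard (c v)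
  have hAfin : ({s ∈ S | c s = c v}).Finite := hSfin.subset (Set.sep_subset _ _)
  have hNsub : G.neighborSet w ∩ S ⊆ {s ∈ S | c s = c v} := by
    rintro u ⟨hadj, huS⟩
    exact ⟨huS, fin2a _ _ _ (c.valid hadj.symm) (c.valid hvw)⟩
  have hMle : ({s ∈ S | c s = c v} \ G.neighborSet w).ncard ≤ 1 := by
    have h1 := Set.ncard_inter_add_ncard_diff_eq_ncard {s ∈ S | c s = c v}
      (G.neighborSet w) hAfin
    have h2 : (G.neighborSet w ∩ S).ncard ≤ ({s ∈ S | c s = c v} ∩ G.neighborSet w).ncard := by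
      refine Set.ncard_le_ncard ?_ (hAfin.inter_of_left _)
      rintro u ⟨h1', h2'⟩
      exact ⟨hNsub ⟨h1', h2'⟩, h1'⟩
    omega
  obtain ⟨u1, u2, h12, hset⟩ := tet_nbr htet s0 hs0S
  have hu1 : B.Adj s0 u1 := by
    have : u1 ∈ B.neighborSet s0 := by rw [hset]; exact Set.mem_insert _ _
    exact this
  have hu2 : B.Adj s0 u2 := by
    have : u2 ∈ B.neighborSet s0 := by rw [hset]; exact Set.mem_insert_of_mem _ rfl
    exact this
  have hcs0 : c v ≠ c s0 := c.valid hvs0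
  have huA : ∀ z, B.Adj s0 z → z ∈ {s ∈ S | c s = c v} := by
    intro z hz
    exact ⟨(hTS (hBT hz)).2, fin2a _ _ _ (c.valid (hTG (hBT hz))).symm hcs0⟩
  have hpick : ∃ z, B.Adj s0 z ∧ G.Adj w z := by
    by_contra hno
    push_neg at hno
    have hm1 : u1 ∈ {s ∈ S | c s = c v} \ G.neighborSet w := ⟨huA u1 hu1, hno u1 hu1⟩
    have hm2 : u2 ∈ {s ∈ S | c s = c v} \ G.neighborSet w := ⟨huA u2 hu2, hno u2 hu2⟩
    have : 1 < ({s ∈ S | c s = c v} \ G.neighborSet w).ncard :=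
      (Set.one_lt_ncard_iff (hAfin.diff)).2 ⟨u1, u2, hm1, hm2, h12⟩
    omega
  obtain ⟨aV, haB, haw⟩ := hpick
  have hext := IsTetragonal.extend T B S aV s0 w v htet hwS hvS hvw.ne' haB.symm
  have hle : T ⊔ fromEdgeSet {s(aV, w), s(w, v), s(v, s0)} ≤ G :=
    sup_le hTG (path3_le haw.symm hvw.symm hvs0)
  have hwin : w ∉ insert v S := by
    simp only [Set.mem_insert_iff]
    rintro (rfl | hws)
    · exact hvw.ne rfl
    · exact hwS hws
  have hnc : (insert w (insert v S)).ncard = 2 * m + 2 := by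
    rw [Set.ncard_insert_of_notMem hwin (hSfin.insert v),
      Set.ncard_insert_of_notMem hvS hSfin, hcard]
  have := hmax _ _ _ ⟨hext, hle⟩
  rw [hnc, hcard] at this
  omega


set_option maxHeartbeats 2000000 in
lemma contra_two {G T B : SimpleGraph V} {S : Set V} {m : ℕ}
    (hopt : IsOptimalTetragonal G T B S) (c : G.Coloring (Fin 2))
    (hcard : S.ncard = 2 * m) (hm : 3 ≤ m)
    {v w1 w2 : V} (hvS : v ∉ S) (hw1S : w1 ∉ S) (hw2S : w2 ∉ S) (h12 : w1 ≠ w2)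
    (hw1deg : m - 1 ≤ (G.neighborSet w1 ∩ S).ncard)
    (hw2deg : m - 1 ≤ (G.neighborSet w2 ∩ S).ncard)
    (hvw1 : G.Adj v w1) (hvw2 : G.Adj v w2) : False := by
  classical
  obtain ⟨⟨htet, hTG⟩, hmax, -⟩ := hopt
  obtain ⟨hBT, hTS⟩ := tet_sub htet
  obtain ⟨-, hSfin, -⟩ := tet_card htet
  have fin2a : ∀ p q r : Fin 2, p ≠ r → q ≠ r → p = q := by decide
  have hAm : {s ∈ S | c s = c v}.ncard = m := classA_card htet hTG c hcard (c v)
  have hAfin : ({s ∈ S | c s = c v}).Finite := hSfin.subset (Set.sep_subset _ _)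
  have hNsub : ∀ wi, G.Adj v wi → G.neighborSet wi ∩ S ⊆ {s ∈ S | c s = c v} := by
    rintro wi hvwi u ⟨hadj, huS⟩
    exact ⟨huS, fin2a _ _ _ (c.valid hadj.symm) (c.valid hvwi)⟩
  have hMle : ∀ wi, G.Adj v wi → m - 1 ≤ (G.neighborSet wi ∩ S).ncard →
      ({s ∈ S | c s = c v} \ G.neighborSet wi).ncard ≤ 1 := by
    intro wi hvwi hdeg
    have h1 := Set.ncard_inter_add_ncard_diff_eq_ncard {s ∈ S | c s = c v}
      (G.neighborSet wi) hAfin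
    have h2 : (G.neighborSet wi ∩ S).ncard
        ≤ ({s ∈ S | c s = c v} ∩ G.neighborSet wi).ncard := by
      refine Set.ncard_le_ncard ?_ (hAfin.inter_of_left _)
      rintro u ⟨h1', h2'⟩
      exact ⟨hNsub wi hvwi ⟨h1', h2'⟩, h1'⟩
    omega
  have hM1 := hMle w1 hvw1 hw1deg
  have hM2 := hMle w2 hvw2 hw2deg
  -- generic swap route
  have swaproute : ∀ wi wj : V, wi ≠ wj → G.Adj v wi → G.Adj v wj → wi ∉ S → wj ∉ S →
      ({s ∈ S | c s = c v} \ G.neighborSet wj).ncard ≤ 1 →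
      (∃ bd ∈ S, c bd ≠ c v ∧ ∀ u, T.Adj bd u → G.Adj wi u) → False := by
    rintro wi wj hij hvwi hvwj hwiS' hwjS' hMj ⟨bd, hbdS, hbdc, hcov⟩
    obtain ⟨u1, u2, h12', hset⟩ := tet_nbr htet bd hbdS
    have hu1 : B.Adj bd u1 := by
      have : u1 ∈ B.neighborSet bd := by rw [hset]; exact Set.mem_insert _ _
      exact this
    have hu2 : B.Adj bd u2 := by
      have : u2 ∈ B.neighborSet bd := by rw [hset]; exact Set.mem_insert_of_mem _ rfl
      exact this
    have huA : ∀ z, B.Adj bd z → z ∈ {s ∈ S | c s = c v} := by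
      intro z hz
      exact ⟨(hTS (hBT hz)).2,
        fin2a _ _ _ (c.valid (hTG (hBT hz))).symm (fun e => hbdc e.symm)⟩
    have hpick : ∃ z, B.Adj bd z ∧ G.Adj wj z := by
      by_contra hno
      push_neg at hno
      have hm1 : u1 ∈ {s ∈ S | c s = c v} \ G.neighborSet wj := ⟨huA u1 hu1, hno u1 hu1⟩
      have hm2 : u2 ∈ {s ∈ S | c s = c v} \ G.neighborSet wj := ⟨huA u2 hu2, hno u2 hu2⟩
      have : 1 < ({s ∈ S | c s = c v} \ G.neighborSet wj).ncard :=
        (Set.one_lt_ncard_iff (hAfin.diff)).2 ⟨u1, u2, hm1, hm2, h12'⟩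
      omega
    obtain ⟨a', haB, haG⟩ := hpick
    obtain ⟨T', B', htet', hT'G, hnc, -⟩ := swap_extend htet hTG bd wi v wj a'
      hbdS hwiS' hvS hwjS' hvwi.ne' hvwj.ne hij hvwi.symm hvwj hcov haB haG
    have := hmax _ _ _ ⟨htet', hT'G⟩
    rw [hnc, hcard] at this
    omega
  by_cases hc1 : ∃ bd ∈ S, c bd ≠ c v ∧ ∀ u, T.Adj bd u → G.Adj w1 u
  · exact swaproute w1 w2 h12 hvw1 hvw2 hw1S hw2S hM2 hc1
  by_cases hc2 : ∃ bd ∈ S, c bd ≠ c v ∧ ∀ u, T.Adj bd u → G.Adj w2 u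
  · exact swaproute w2 w1 h12.symm hvw2 hvw1 hw2S hw1S hM1 hc2
  push_neg at hc1 hc2
  -- the case of two stars
  have hTadjA : ∀ bd u, bd ∈ S → c bd ≠ c v → T.Adj bd u → u ∈ {s ∈ S | c s = c v} := by
    intro bd u hbdS hbdc hadj
    exact ⟨(hTS hadj).2, fin2a _ _ _ (c.valid (hTG hadj)).symm (fun e => hbdc e.symm)⟩
  obtain ⟨j, hj⟩ : ∃ j : Fin 2, ∀ k : Fin 2, k ≠ c v ↔ k = j := by
    revert hvw1
    have : ∀ i : Fin 2, ∃ j : Fin 2, ∀ k : Fin 2, (k ≠ i ↔ k = j) := by decide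
    intro _
    exact this (c v)
  have hBbm : {s ∈ S | c s = j}.ncard = m := classA_card htet hTG c hcard j
  have hBbeq : {s ∈ S | c s ≠ c v} = {s ∈ S | c s = j} := by
    ext u
    simp only [Set.mem_setOf_eq]
    exact and_congr_right fun _ => hj (c u)
  have hBb_ne : ∃ bd, bd ∈ S ∧ c bd ≠ c v := by
    have hne : ({s ∈ S | c s = j}).Nonempty := by
      apply Set.nonempty_of_ncard_ne_zero
      omega
    obtain ⟨bd0, hbd0S, hbd0j⟩ := hne
    exact ⟨bd0, hbd0S, (hj (c bd0)).2 hbd0j⟩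
  obtain ⟨bd0, hbd0S, hbd0c⟩ := hBb_ne
  -- M1 and M2 are singletons {e1}, {e2}
  obtain ⟨u0, hu0T, hu0N⟩ := hc1 bd0 hbd0S hbd0c
  have hM1one : ({s ∈ S | c s = c v} \ G.neighborSet w1).ncard = 1 := by
    have h0 : 0 < ({s ∈ S | c s = c v} \ G.neighborSet w1).ncard :=
      (Set.ncard_pos (hAfin.diff)).2 ⟨u0, ⟨hTadjA bd0 u0 hbd0S hbd0c hu0T, hu0N⟩⟩
    omega
  obtain ⟨e1, he1⟩ := Set.ncard_eq_one.1 hM1one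
  obtain ⟨u0', hu0T', hu0N'⟩ := hc2 bd0 hbd0S hbd0c
  have hM2one : ({s ∈ S | c s = c v} \ G.neighborSet w2).ncard = 1 := by
    have h0 : 0 < ({s ∈ S | c s = c v} \ G.neighborSet w2).ncard :=
      (Set.ncard_pos (hAfin.diff)).2 ⟨u0', ⟨hTadjA bd0 u0' hbd0S hbd0c hu0T', hu0N'⟩⟩
    omega
  obtain ⟨e2, he2⟩ := Set.ncard_eq_one.1 hM2one
  have hstar1 : ∀ bd, bd ∈ S → c bd ≠ c v → T.Adj bd e1 := by
    intro bd hbdS hbdc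
    obtain ⟨u, huT, huN⟩ := hc1 bd hbdS hbdc
    have hmem : u ∈ {s ∈ S | c s = c v} \ G.neighborSet w1 :=
      ⟨hTadjA bd u hbdS hbdc huT, huN⟩
    rw [he1, Set.mem_singleton_iff] at hmem
    exact hmem ▸ huT
  have hstar2 : ∀ bd, bd ∈ S → c bd ≠ c v → T.Adj bd e2 := by
    intro bd hbdS hbdc
    obtain ⟨u, huT, huN⟩ := hc2 bd hbdS hbdc
    have hmem : u ∈ {s ∈ S | c s = c v} \ G.neighborSet w2 :=
      ⟨hTadjA bd u hbdS hbdc huT, huN⟩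
    rw [he2, Set.mem_singleton_iff] at hmem
    exact hmem ▸ huT
  have hN1 : ∀ u, u ∈ {s ∈ S | c s = c v} → u ≠ e1 → G.Adj w1 u := by
    intro u huA hne
    by_contra hn
    have hmem : u ∈ {s ∈ S | c s = c v} \ G.neighborSet w1 := ⟨huA, hn⟩
    rw [he1, Set.mem_singleton_iff] at hmem
    exact hne hmem
  have hN2 : ∀ u, u ∈ {s ∈ S | c s = c v} → u ≠ e2 → G.Adj w2 u := by
    intro u huA hne
    by_contra hn
    have hmem : u ∈ {s ∈ S | c s = c v} \ G.neighborSet w2 := ⟨huA, hn⟩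
    rw [he2, Set.mem_singleton_iff] at hmem
    exact hne hmem
  -- decompose the tetragonal graph
  rcases tet_decomp htet with ⟨a0, b0, c0, d0, hSeq⟩ |
    ⟨T0, B0, S0, aa, bb, x, y, h0, hx, hy, hxy, hab0, hTeq, hBeq, hSeq⟩
  · have h1 := Set.ncard_insert_le a0 ({b0, c0, d0} : Set V)
    have h2 := Set.ncard_insert_le b0 ({c0, d0} : Set V)
    have h3 := Set.ncard_insert_le c0 ({d0} : Set V)
    have h4 : ({d0} : Set V).ncard = 1 := Set.ncard_singleton _
    rw [hSeq] at hcard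
    omega
  · have hT0G : T0 ≤ G := by
      refine le_trans ?_ hTG
      rw [hTeq]
      exact le_sup_left
    obtain ⟨hB0T0, hT0S0⟩ := tet_sub h0
    have haaS0 : aa ∈ S0 := (hT0S0 (hB0T0 hab0)).1
    have hbbS0 : bb ∈ S0 := (hT0S0 (hB0T0 hab0)).2
    obtain ⟨-, hS0fin, -⟩ := tet_card h0
    have hS0sub : S0 ⊆ S := by
      rw [hSeq]
      exact fun u hu => Set.mem_insert_of_mem _ (Set.mem_insert_of_mem _ hu)
    have hxS : x ∈ S := by rw [hSeq]; exact Set.mem_insert _ _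
    have hyS : y ∈ S := by rw [hSeq]; exact Set.mem_insert_of_mem _ (Set.mem_insert _ _)
    have hxi : x ∉ insert y S0 := by
      simp only [Set.mem_insert_iff]
      rintro (rfl | hxs)
      · exact hxy rfl
      · exact hx hxs
    have hS0card : S0.ncard + 2 = 2 * m := by
      rw [hSeq, Set.ncard_insert_of_notMem hxi (hS0fin.insert y),
        Set.ncard_insert_of_notMem hy hS0fin] at hcard
      omega
    have hTax : T.Adj aa x := by
      rw [hTeq]
      exact Or.inr ((fromEdgeSet_adj _).2 ⟨Or.inl rfl, fun e => hx (e ▸ haaS0)⟩)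
    have hTxy : T.Adj x y := by
      rw [hTeq]
      exact Or.inr ((fromEdgeSet_adj _).2 ⟨Or.inr (Or.inl rfl), hxy⟩)
    have hTyb : T.Adj y bb := by
      rw [hTeq]
      exact Or.inr ((fromEdgeSet_adj _).2 ⟨Or.inr (Or.inr rfl),
        fun e => hy (e ▸ hbbS0)⟩)
    have hGxy : G.Adj x y := hTG hTxy
    have key : ∀ f g r q : V, f ∉ S0 → g ∉ S0 → f ≠ g → B0.Adj r q →
        c f = c v → c g ≠ c v →
        T.Adj r f → G.Adj f g → T.Adj g q →
        (∀ u, T.Adj g u → u = f ∨ u = q) →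
        S = insert f (insert g S0) → False := by
      intro f g r q hfS0 hgS0 hfg hrq hcf hcg hTrf hGfg hTgq htgnbr hSeq'
      have hfS : f ∈ S := by rw [hSeq']; exact Set.mem_insert _ _
      have hgS : g ∈ S := by
        rw [hSeq']; exact Set.mem_insert_of_mem _ (Set.mem_insert _ _)
      have hrS0 : r ∈ S0 := (hT0S0 (hB0T0 hrq)).1
      have hqS0 : q ∈ S0 := (hT0S0 (hB0T0 hrq)).2
      have hGrf : G.Adj r f := hTG hTrf
      have hGgq : G.Adj g q := hTG hTgq
      have hge1 : e1 = f ∨ e1 = q := htgnbr e1 (hstar1 g hgS hcg)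
      have hge2 : e2 = f ∨ e2 = q := htgnbr e2 (hstar2 g hgS hcg)
      have hcr : c r ≠ c v := fun e => (c.valid hGrf) (e.trans hcf.symm)
      have hcq : c q = c v := fin2a _ _ _ (c.valid hGgq).symm (fun e => hcg e.symm)
      have hfA : f ∈ {s ∈ S | c s = c v} := ⟨hfS, hcf⟩
      have hS0A : ∀ u, u ∈ S0 → c u = c v → u ∈ {s ∈ S | c s = c v} :=
        fun u hu hc' => ⟨hS0sub hu, hc'⟩
      obtain ⟨n1, n2, hn12, hnset⟩ := tet_nbr h0 r hrS0
      have hn1B : B0.Adj r n1 := by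
        have : n1 ∈ B0.neighborSet r := by rw [hnset]; exact Set.mem_insert _ _
        exact this
      have hn2B : B0.Adj r n2 := by
        have : n2 ∈ B0.neighborSet r := by rw [hnset]; exact Set.mem_insert_of_mem _ rfl
        exact this
      have hqmem : q = n1 ∨ q = n2 := by
        have hq' : q ∈ B0.neighborSet r := hrq
        rw [hnset] at hq'
        simpa using hq'
      obtain ⟨r'', hr''B, hr''q⟩ : ∃ z, B0.Adj r z ∧ z ≠ q := by
        rcases hqmem with rfl | rfl
        · exact ⟨n2, hn2B, fun e => hn12 e.symm⟩
        · exact ⟨n1, hn1B, hn12⟩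
      have hr''S0 : r'' ∈ S0 := (hT0S0 (hB0T0 hr''B)).2
      have hcr'' : c r'' = c v :=
        fin2a _ _ _ (c.valid (hT0G (hB0T0 hr''B))).symm (fun e => hcr e.symm)
      have hr''A : r'' ∈ {s ∈ S | c s = c v} := hS0A r'' hr''S0 hcr''
      have hr''f : r'' ≠ f := fun e => hfS0 (e ▸ hr''S0)
      have hr''e1 : r'' ≠ e1 := by
        rcases hge1 with rfl | rfl
        · exact hr''f
        · exact hr''q
      have hr''e2 : r'' ≠ e2 := by
        rcases hge2 with rfl | rfl
        · exact hr''f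
        · exact hr''q
      have hGw1r'' : G.Adj w1 r'' := hN1 r'' hr''A hr''e1
      have hGw2r'' : G.Adj w2 r'' := hN2 r'' hr''A hr''e2
      have hvS0 : v ∉ S0 := fun e => hvS (hS0sub e)
      have hw1S0 : w1 ∉ S0 := fun e => hw1S (hS0sub e)
      have hw2S0 : w2 ∉ S0 := fun e => hw2S (hS0sub e)
      have hfw1 : f ≠ w1 := fun e => hw1S (e ▸ hfS)
      have hfw2 : f ≠ w2 := fun e => hw2S (e ▸ hfS)
      have hfv : f ≠ v := fun e => hvS (e ▸ hfS)
      have routeB : ∀ wi wj : V, wi ∉ S → wj ∉ S → wi ≠ wj → G.Adj v wi → G.Adj v wj →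
          G.Adj wi f → G.Adj wi r'' → G.Adj wj r'' → False := by
        intro wi wj hwiS' hwjS' hij hvwi hvwj hwif hwir hwjr
        have hwiS0 : wi ∉ S0 := fun e => hwiS' (hS0sub e)
        have hwjS0 : wj ∉ S0 := fun e => hwjS' (hS0sub e)
        have hfwi : f ≠ wi := fun e => hwiS' (e ▸ hfS)
        have hext1 := IsTetragonal.extend T0 B0 S0 r r'' f wi h0 hfS0 hwiS0 hfwi hr''B
        have hT1le : T0 ⊔ fromEdgeSet {s(r, f), s(f, wi), s(wi, r'')} ≤ G :=
          sup_le hT0G (path3_le hGrf hwif.symm hwir)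
        have hwir'' : wi ≠ r'' := fun e => hwiS' (e ▸ hS0sub hr''S0)
        have hB1adj : (B0.deleteEdges {s(r, r'')}
            ⊔ fromEdgeSet {s(r, f), s(f, wi), s(wi, r'')}).Adj wi r'' :=
          Or.inr ((fromEdgeSet_adj _).2 ⟨Or.inr (Or.inr rfl), hwir''⟩)
        have hvS1 : v ∉ insert f (insert wi S0) := by
          simp only [Set.mem_insert_iff]
          rintro (rfl | rfl | hvs)
          · exact hfv rfl
          · exact hvwi.ne rfl
          · exact hvS0 hvs
        have hwjS1 : wj ∉ insert f (insert wi S0) := by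
          simp only [Set.mem_insert_iff]
          rintro (rfl | rfl | hws)
          · exact hwjS' hfS
          · exact hij rfl
          · exact hwjS0 hws
        have hext2 := IsTetragonal.extend _ _ _ wi r'' v wj hext1 hvS1 hwjS1
          hvwj.ne hB1adj
        have hT2le : (T0 ⊔ fromEdgeSet {s(r, f), s(f, wi), s(wi, r'')})
            ⊔ fromEdgeSet {s(wi, v), s(v, wj), s(wj, r'')} ≤ G :=
          sup_le hT1le (path3_le hvwi.symm hvwj hwjr)
        have hnc : (insert v (insert wj (insert f (insert wi S0)))).ncard
            = S0.ncard + 4 := by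
          have hfin1 : (insert wi S0).Finite := hS0fin.insert wi
          have hfin2 : (insert f (insert wi S0)).Finite := hfin1.insert f
          have hfin3 : (insert wj (insert f (insert wi S0))).Finite := hfin2.insert wj
          have hf1 : f ∉ insert wi S0 := by
            simp only [Set.mem_insert_iff]
            rintro (rfl | hfs)
            · exact hfwi rfl
            · exact hfS0 hfs
          have hv1 : v ∉ insert wj (insert f (insert wi S0)) := by
            simp only [Set.mem_insert_iff]
            rintro (rfl | rfl | rfl | hvs)
            · exact hvwj.ne rfl
            · exact hfv rfl
            · exact hvwi.ne rfl
            · exact hvS0 hvs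
          rw [Set.ncard_insert_of_notMem hv1 hfin3,
            Set.ncard_insert_of_notMem hwjS1 hfin2,
            Set.ncard_insert_of_notMem hf1 hfin1,
            Set.ncard_insert_of_notMem hwiS0 hS0fin]
        have := hmax _ _ _ ⟨hext2, hT2le⟩
        rw [hnc, hcard] at this
        omega
      by_cases h1f : e1 = f
      · by_cases h2f : e2 = f
        · -- Route A : both stars equal f
          have hBbg : m - 1 ≤ ({s ∈ S | c s ≠ c v} \ {g}).ncard := by
            have hBbfin : ({s ∈ S | c s ≠ c v}).Finite :=
              hSfin.subset (Set.sep_subset _ _)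
            have hsub1 : {s ∈ S | c s ≠ c v} ⊆ insert g ({s ∈ S | c s ≠ c v} \ {g}) := by
              intro u hu
              by_cases hug : u = g
              · exact hug ▸ Set.mem_insert _ _
              · exact Set.mem_insert_of_mem _ ⟨hu, hug⟩
            have h2' := Set.ncard_le_ncard hsub1 ((hBbfin.diff).insert g)
            have h3' := Set.ncard_insert_le g ({s ∈ S | c s ≠ c v} \ {g})
            rw [hBbeq] at *
            omega
          have hbdex : ¬ ({s ∈ S | c s ≠ c v} \ {g} ⊆ {r}) := by
            intro hsub'
            have := Set.ncard_le_ncard hsub' (Set.finite_singleton r)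
            rw [Set.ncard_singleton] at this
            omega
          obtain ⟨bd, hbdmem, hbdr⟩ := Set.not_subset.1 hbdex
          obtain ⟨⟨hbdS, hbdc⟩, hbdg⟩ := hbdmem
          rw [Set.mem_singleton_iff] at hbdr
          have hbdg' : bd ≠ g := fun e => hbdg (Set.mem_singleton_iff.2 e)
          have hbdS0 : bd ∈ S0 := by
            have hbdS' := hbdS
            rw [hSeq'] at hbdS'
            rcases hbdS' with rfl | rfl | hmem
            · exact absurd hcf hbdc
            · exact absurd rfl hbdg'
            · exact hmem
          have hcov : ∀ u, T0.Adj bd u → G.Adj w1 u := by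
            intro u hu
            have huS0 : u ∈ S0 := (hT0S0 hu).2
            have hcu : c u = c v :=
              fin2a _ _ _ (c.valid (hT0G hu)).symm (fun e => hbdc e.symm)
            have hue1 : u ≠ e1 := by
              rw [h1f]
              exact fun e => hfS0 (e ▸ huS0)
            exact hN1 u (hS0A u huS0 hcu) hue1
          obtain ⟨q1, q2, hq12, hqset⟩ := tet_nbr h0 bd hbdS0
          have hq1B : B0.Adj bd q1 := by
            have : q1 ∈ B0.neighborSet bd := by rw [hqset]; exact Set.mem_insert _ _
            exact this
          have hq1S0 : q1 ∈ S0 := (hT0S0 (hB0T0 hq1B)).2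
          have hcq1 : c q1 = c v :=
            fin2a _ _ _ (c.valid (hT0G (hB0T0 hq1B))).symm (fun e => hbdc e.symm)
          have hq1e2 : q1 ≠ e2 := by
            rw [h2f]
            exact fun e => hfS0 (e ▸ hq1S0)
          have hGw2q1 : G.Adj w2 q1 := hN2 q1 (hS0A q1 hq1S0 hcq1) hq1e2
          obtain ⟨T2, B2, htet2, hT2G, hnc2, hB2eq⟩ := swap_extend h0 hT0G bd w1 v w2 q1
            hbdS0 hw1S0 hvS0 hw2S0 hvw1.ne' hvw2.ne h12 hvw1.symm hvw2 hcov hq1B hGw2q1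
          have hrbd : r ≠ bd := fun e => hbdr e.symm
          have hrw1 : r ≠ w1 := fun e => hw1S (e ▸ hS0sub hrS0)
          have hqbd : q ≠ bd := fun e => hbdc (e ▸ hcq)
          have hqw1 : q ≠ w1 := fun e => hw1S (e ▸ hS0sub hqS0)
          have hB2rq : B2.Adj r q := by
            rw [hB2eq]
            refine Or.inl ⟨?_, ?_⟩
            · rw [map_adj]
              refine ⟨r, q, hrq, ?_, ?_⟩ <;> simp only [Equiv.coe_toEmbedding]
              · exact Equiv.swap_apply_of_ne_of_ne hrbd hrw1
              · exact Equiv.swap_apply_of_ne_of_ne hqbd hqw1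
            · intro hmem
              rw [fromEdgeSet_adj] at hmem
              obtain ⟨hmem', -⟩ := hmem
              rw [Set.mem_singleton_iff, Sym2.eq_iff] at hmem'
              rcases hmem' with ⟨h', -⟩ | ⟨-, h'⟩
              · exact hrw1 h'
              · exact hqw1 h' 
          have himg : ∀ z, z ∉ S0 → z ≠ w1 → z ∉ (Equiv.swap bd w1) '' S0 := by
            rintro z hzS0 hzw1 ⟨u, huS0, hσu⟩
            by_cases hub : u = bd
            · rw [hub, Equiv.swap_apply_left] at hσu
              exact hzw1 hσu.symm
            · have huw1 : u ≠ w1 := fun e => hw1S (e ▸ hS0sub huS0)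
              rw [Equiv.swap_apply_of_ne_of_ne hub huw1] at hσu
              exact hzS0 (hσu ▸ huS0)
          have hfS2 : f ∉ insert v (insert w2 ((Equiv.swap bd w1) '' S0)) := by
            simp only [Set.mem_insert_iff]
            rintro (rfl | rfl | hmem)
            · exact hfv rfl
            · exact hfw2 rfl
            · exact himg f hfS0 hfw1 hmem
          have hgS2 : g ∉ insert v (insert w2 ((Equiv.swap bd w1) '' S0)) := by
            simp only [Set.mem_insert_iff]
            rintro (rfl | rfl | hmem)
            · exact hvS hgS
            · exact hw2S hgS
            · exact himg g hgS0 (fun e => hw1S (e ▸ hgS)) hmem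
          have hext3 := IsTetragonal.extend _ _ _ r q f g htet2 hfS2 hgS2 hfg hB2rq
          have hT3le : T2 ⊔ fromEdgeSet {s(r, f), s(f, g), s(g, q)} ≤ G :=
            sup_le hT2G (path3_le hGrf hGfg hGgq)
          have hfing : ((Equiv.swap bd w1) '' S0).Finite := hS0fin.image _
          have hfin2' : (insert v (insert w2 ((Equiv.swap bd w1) '' S0))).Finite :=
            (hfing.insert w2).insert v
          have hf3 : f ∉ insert g (insert v (insert w2 ((Equiv.swap bd w1) '' S0))) := by
            simp only [Set.mem_insert_iff] at hfS2 ⊢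
            rintro (rfl | h')
            · exact hfg rfl
            · exact hfS2 h'
          have hnc3 : (insert f (insert g (insert v (insert w2
              ((Equiv.swap bd w1) '' S0))))).ncard = S0.ncard + 4 := by
            rw [Set.ncard_insert_of_notMem hf3 (hfin2'.insert g),
              Set.ncard_insert_of_notMem hgS2 hfin2', hnc2]
          have hfinal := hmax _ _ _ ⟨hext3, hT3le⟩
          rw [hnc3, hcard] at hfinal
          omega
        · exact routeB w2 w1 hw2S hw1S h12.symm hvw2 hvw1
            (hN2 f hfA (fun e => h2f e.symm)) hGw2r'' hGw1r''
      · exact routeB w1 w2 hw1S hw2S h12 hvw1 hvw2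
          (hN1 f hfA (fun e => h1f e.symm)) hGw1r'' hGw2r''
    by_cases hcx : c x = c v
    · have hcy : c y ≠ c v := fun e => (c.valid hGxy) (hcx.trans e.symm)
      have htgnbr : ∀ u, T.Adj y u → u = x ∨ u = bb := by
        intro u hu
        rw [hTeq, sup_adj] at hu
        rcases hu with hu | hu
        · exact absurd (hT0S0 hu).1 hy
        · rw [fromEdgeSet_adj] at hu
          obtain ⟨hmem, -⟩ := hu
          have hyaa : y ≠ aa := fun e => hy (e ▸ haaS0)
          have hybb : y ≠ bb := fun e => hy (e ▸ hbbS0)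
          simp only [Set.mem_insert_iff, Set.mem_singleton_iff, Sym2.eq_iff] at hmem
          tauto
      exact key x y aa bb hx hy hxy hab0 hcx hcy hTax hGxy hTyb htgnbr hSeq
    · have hcy : c y = c v := fin2a _ _ _ (c.valid hGxy.symm) (fun e => hcx e.symm)
      have htgnbr : ∀ u, T.Adj x u → u = y ∨ u = aa := by
        intro u hu
        rw [hTeq, sup_adj] at hu
        rcases hu with hu | hu
        · exact absurd (hT0S0 hu).1 hx
        · rw [fromEdgeSet_adj] at hu
          obtain ⟨hmem, -⟩ := hu
          have hxaa : x ≠ aa := fun e => hx (e ▸ haaS0)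
          have hxbb : x ≠ bb := fun e => hx (e ▸ hbbS0)
          simp only [Set.mem_insert_iff, Set.mem_singleton_iff, Sym2.eq_iff] at hmem
          tauto
      have hSeq2 : S = insert y (insert x S0) := by
        rw [hSeq, Set.insert_comm]
      exact key y x bb aa hy hx (fun e => hxy e.symm) hab0.symm hcy hcx hTyb.symm
        hGxy.symm hTax.symm htgnbr hSeq2


/-- Lemma 3.7 (4): vertices outside `V(T) ∪ R` satisfy exactly one of two degree conditions. -/
theorem optimal_tetragonal_outside {V : Type*} [Fintype V]
    (G T B : SimpleGraph V) (S : Set V) (m : ℕ)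
    (hbip : G.Colorable 2) (hopt : IsOptimalTetragonal G T B S)
    (hcard : S.ncard = 2 * m) (hm : 3 ≤ m) :
    ∀ v : V, v ∉ S → ¬ (m - 1 ≤ (G.neighborSet v ∩ S).ncard) →
      Xor'
        ((G.neighborSet v ∩ {w : V | w ∉ S ∧ m - 1 ≤ (G.neighborSet w ∩ S).ncard}).ncard = 0 ∧
          (G.neighborSet v ∩ S).ncard ≤ m - 2)
        ((G.neighborSet v ∩ {w : V | w ∉ S ∧ m - 1 ≤ (G.neighborSet w ∩ S).ncard}).ncard = 1 ∧
          (G.neighborSet v ∩ S).ncard = 0) := by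
  intro v hvS hvdeg
  classical
  obtain ⟨c⟩ := hbip
  have hS_le : (G.neighborSet v ∩ S).ncard ≤ m - 2 := by
    push_neg at hvdeg
    omega
  have hfinNR : (G.neighborSet v
      ∩ {w : V | w ∉ S ∧ m - 1 ≤ (G.neighborSet w ∩ S).ncard}).Finite := Set.toFinite _
  have hF1 : (G.neighborSet v
      ∩ {w : V | w ∉ S ∧ m - 1 ≤ (G.neighborSet w ∩ S).ncard}).Nonempty →
      (G.neighborSet v ∩ S).ncard = 0 := by
    rintro ⟨w, hwN, hwS', hwdeg⟩
    by_contra hne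
    obtain ⟨s0, hs0N, hs0S⟩ := Set.nonempty_of_ncard_ne_zero hne
    exact contra_one hopt c hcard hm hvS hwS' hwdeg hwN hs0N hs0S
  have hF2 : (G.neighborSet v
      ∩ {w : V | w ∉ S ∧ m - 1 ≤ (G.neighborSet w ∩ S).ncard}).ncard ≤ 1 := by
    by_contra hgt
    push_neg at hgt
    obtain ⟨w1, w2, hw1, hw2, hne⟩ := (Set.one_lt_ncard_iff hfinNR).1 hgt
    obtain ⟨hw1N, hw1S', hw1deg⟩ := hw1
    obtain ⟨hw2N, hw2S', hw2deg⟩ := hw2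
    exact contra_two hopt c hcard hm hvS hw1S' hw2S' hne hw1deg hw2deg hw1N hw2N
  by_cases h0 : (G.neighborSet v
      ∩ {w : V | w ∉ S ∧ m - 1 ≤ (G.neighborSet w ∩ S).ncard}).ncard = 0
  · refine Or.inl ⟨⟨h0, hS_le⟩, ?_⟩
    rintro ⟨h1, -⟩
    omega
  · have hone : (G.neighborSet v
        ∩ {w : V | w ∉ S ∧ m - 1 ≤ (G.neighborSet w ∩ S).ncard}).ncard = 1 := by
      omega
    have hzero : (G.neighborSet v ∩ S).ncard = 0 :=
      hF1 (Set.nonempty_of_ncard_ne_zero h0)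
    refine Or.inr ⟨⟨hone, hzero⟩, ?_⟩
    rintro ⟨h0', -⟩
    omega

end Dean
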